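/- The quadratic map ψ_2 = (ψ_2^j)_{j≥1} on sequences v ∈ h^{m'}(N), defined by ψ_2^j(v) = (2√(πj))^{-1} Σ_{k∈Z_0, k≠j} (|k|^{1/2}|j−k|^{1/2}/(k(k−j))) v'_k v'_{j−k} where v'_k = v_k for k ≥ 1 and v'_k = conj(v_{−k}) for k ≤ −1, satisfies the symmetry relations ∂ψ_2^j/∂v̄_k = ∂ψ_2^k/∂v̄_j and ∂ψ_2^j/∂v_k = −∂ψ̄_2^k/∂v̄_j for all j,k ∈ N. Consequently the 1-form i ψ_2(v) dv is closed, and (id + ψ_2)^* ω_0 = ω_0 + O(v²) terms in the sense that the quadratic correction to ω_0 vanishes. -/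

import Mathlib

open scoped Real ENNReal NNReal ComplexConjugate
open Function

noncomputable section

/-- The weighted `l²` norm `‖v‖_{m'}² = Σ_{j≥1} j^{2m'}|v_j|²` over positive indices. -/
def hn (m : ℝ) (v : ℤ → ℂ) : ℝ≥0∞ :=
  (∑' j : ℤ, if 1 ≤ j then (j.natAbs : ℝ≥0∞) ^ (2 * m) * (‖v j‖₊ : ℝ≥0∞) ^ 2 else 0) ^
    ((1 : ℝ) / 2)

/-- Extension of `v = (v_j)_{j ≥ 1}` to negative indices by `v'_{-k} = conj v_k`. -/
def vext (v : ℤ → ℂ) (k : ℤ) : ℂ :=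
  if 0 < k then v k else if k < 0 then conj (v (-k)) else 0

/-- The quadratic part `ψ₂^j(v) = (2√(πj))⁻¹ Σ_{k ≠ 0, j} (|k|^{1/2}|j−k|^{1/2}/(k(k−j)))
v'_k v'_{j−k}` of the integrating transformation for KdV. -/
def ψ2 (j : ℤ) (v : ℤ → ℂ) : ℂ :=
  (((2 * Real.sqrt (π * (j : ℝ)))⁻¹ : ℝ) : ℂ) *
    ∑' k : ℤ, if k ≠ 0 ∧ k ≠ j then
      (((Real.sqrt |(k : ℝ)| * Real.sqrt |(j : ℝ) - (k : ℝ)|) /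
        ((k : ℝ) * ((k : ℝ) - (j : ℝ))) : ℝ) : ℂ) * vext v k * vext v (j - k)
    else 0

/-- The derivative in the real direction of the `k`-th coordinate. -/
def Dx (f : (ℤ → ℂ) → ℂ) (v : ℤ → ℂ) (k : ℤ) : ℂ :=
  deriv (fun t : ℝ => f (update v k (v k + (t : ℂ)))) 0

/-- The derivative in the imaginary direction of the `k`-th coordinate. -/
def Dy (f : (ℤ → ℂ) → ℂ) (v : ℤ → ℂ) (k : ℤ) : ℂ :=
  deriv (fun t : ℝ => f (update v k (v k + (t : ℂ) * Complex.I))) 0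

/-- The Wirtinger derivative `∂f/∂v_k = ½(∂_x − i ∂_y) f`. -/
def wirt (f : (ℤ → ℂ) → ℂ) (v : ℤ → ℂ) (k : ℤ) : ℂ :=
  (Dx f v k - Complex.I * Dy f v k) / 2

/-- The conjugate Wirtinger derivative `∂f/∂v̄_k = ½(∂_x + i ∂_y) f`. -/
def wirtBar (f : (ℤ → ℂ) → ℂ) (v : ℤ → ℂ) (k : ℤ) : ℂ :=
  (Dx f v k + Complex.I * Dy f v k) / 2

/-- The real 1-form `i ψ₂(v) dv`, evaluated at the tangent vector `ξ`. -/
def oneForm (v ξ : ℤ → ℂ) : ℝ :=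
  (∑' j : ℤ, if 1 ≤ j then Complex.I * ψ2 j v * conj (ξ j) else 0).re

namespace Psi2Aux

open Complex

/-- coefficient of the quadratic form -/
def coeff (j κ : ℤ) : ℝ :=
  (Real.sqrt |(κ : ℝ)| * Real.sqrt |(j : ℝ) - (κ : ℝ)|) / ((κ : ℝ) * ((κ : ℝ) - (j : ℝ)))

def c0 (j : ℤ) : ℝ := (2 * Real.sqrt (π * (j : ℝ)))⁻¹

def T0 (j : ℤ) (v : ℤ → ℂ) (κ : ℤ) : ℂ :=
  if κ ≠ 0 ∧ κ ≠ j then (coeff j κ : ℂ) * vext v κ * vext v (j - κ) else 0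

def Lt (j : ℤ) (v u : ℤ → ℂ) (κ : ℤ) : ℂ :=
  if κ ≠ 0 ∧ κ ≠ j then
    (coeff j κ : ℂ) * (vext u κ * vext v (j - κ) + vext v κ * vext u (j - κ)) else 0

def Qt (j : ℤ) (u : ℤ → ℂ) (κ : ℤ) : ℂ :=
  if κ ≠ 0 ∧ κ ≠ j then (coeff j κ : ℂ) * vext u κ * vext u (j - κ) else 0

lemma psi2_eq (j : ℤ) (v : ℤ → ℂ) : ψ2 j v = (c0 j : ℂ) * ∑' κ, T0 j v κ := rfl

lemma vext_addf (v u : ℤ → ℂ) (κ : ℤ) :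
    vext (fun i => v i + u i) κ = vext v κ + vext u κ := by
  unfold vext; split_ifs <;> simp

lemma vext_conj (v : ℤ → ℂ) (n : ℤ) : conj (vext v n) = vext v (-n) := by
  unfold vext
  rcases lt_trichotomy n 0 with h | h | h
  · simp [h, not_lt.mpr h.le, h.ne, neg_pos.mpr h]
  · simp [h]
  · simp [h, not_lt.mpr h.le, (neg_neg_iff_pos.mpr h), not_lt.mpr (neg_nonpos_of_nonneg h.le)]

lemma vext_smul_real (t : ℝ) (u : ℤ → ℂ) (κ : ℤ) :
    vext (fun i => (t : ℂ) * u i) κ = (t : ℂ) * vext u κ := by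
  unfold vext; split_ifs <;> simp

lemma vext_single (k : ℤ) (hk : 1 ≤ k) (c : ℂ) (κ : ℤ) :
    vext (fun i => if i = k then c else 0) κ =
      if κ = k then c else if κ = -k then conj c else 0 := by
  unfold vext
  rcases lt_trichotomy κ 0 with h | h | h
  · simp only [not_lt.mpr h.le, h, if_false, if_true]
    by_cases h1 : κ = -k
    · have h2 : -κ = k := by omega
      simp [h1, h2, show ¬ (κ = k) by omega, show ¬ (-k = k) by omega]
    · simp [h1, show ¬ (-κ = k) by omega, show ¬ (κ = k) by omega]
  · simp [h, show ¬ ((0:ℤ) = k) by omega, show ¬ ((0:ℤ) = -k) by omega]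
  · simp only [h, if_true]
    by_cases h1 : κ = k
    · simp [h1]
    · simp [h1, show ¬ (κ = -k) by omega]

end Psi2Aux
namespace Psi2Aux

open Complex

lemma coeff_reflect (j k : ℤ) : coeff j (j - k) = coeff j k := by
  unfold coeff
  push_cast
  rw [show (j:ℝ) - ((j:ℝ) - (k:ℝ)) = (k:ℝ) by ring, mul_comm (Real.sqrt |(j:ℝ) - (k:ℝ)|)]
  rw [show ((j:ℝ) - (k:ℝ)) * ((j:ℝ) - (k:ℝ) - (j:ℝ)) = (k:ℝ) * ((k:ℝ) - (j:ℝ)) by ring]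

lemma coeff_reflect' (j k : ℤ) : coeff j (j + k) = coeff j (-k) := by
  have := coeff_reflect j (-k)
  rwa [show j - -k = j + k by ring] at this

lemma c0_coeff_neg (j k : ℤ) (hj : 1 ≤ j) (hk : 1 ≤ k) :
    c0 j * coeff j (-k) = c0 k * coeff k (-j) := by
  have hjr : (0:ℝ) < (j:ℝ) := by exact_mod_cast hj
  have hkr : (0:ℝ) < (k:ℝ) := by exact_mod_cast hk
  have hjk : (0:ℝ) < (j:ℝ) + (k:ℝ) := by linarith
  unfold c0 coeff
  push_cast
  rw [abs_neg, abs_neg, abs_of_pos hkr, abs_of_pos hjr,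
    show (j:ℝ) - -(k:ℝ) = (j:ℝ) + (k:ℝ) by ring, show (k:ℝ) - -(j:ℝ) = (j:ℝ) + (k:ℝ) by
      ring,
    show -(k:ℝ) * (-(k:ℝ) - (j:ℝ)) = (k:ℝ) * ((j:ℝ) + (k:ℝ)) by ring,
    show -(j:ℝ) * (-(j:ℝ) - (k:ℝ)) = (j:ℝ) * ((j:ℝ) + (k:ℝ)) by ring,
    Real.sqrt_mul Real.pi_pos.le, Real.sqrt_mul Real.pi_pos.le, abs_of_pos hjk,
    ← div_mul_div_comm, ← div_mul_div_comm,
    Real.sqrt_div_self', Real.sqrt_div_self', Real.sqrt_div_self']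
  simp only [mul_inv, one_div]
  ring

lemma c0_coeff_skew (j k : ℤ) (hj : 1 ≤ j) (hk : 1 ≤ k) :
    c0 j * coeff j k = -(c0 k * coeff k j) := by
  have hjr : (0:ℝ) < (j:ℝ) := by exact_mod_cast hj
  have hkr : (0:ℝ) < (k:ℝ) := by exact_mod_cast hk
  unfold c0 coeff
  rw [abs_of_pos hkr, abs_of_pos hjr, abs_sub_comm ((k:ℝ)) ((j:ℝ)),
    Real.sqrt_mul Real.pi_pos.le, Real.sqrt_mul Real.pi_pos.le,
    ← div_mul_div_comm, ← div_mul_div_comm,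
    Real.sqrt_div_self', Real.sqrt_div_self',
    show (j:ℝ) - (k:ℝ) = -((k:ℝ) - (j:ℝ)) by ring, div_neg]
  simp only [mul_inv, one_div, div_eq_mul_inv]
  ring

end Psi2Aux
namespace Psi2Aux

open Complex

lemma hasDerivAt_ofReal (x : ℝ) : HasDerivAt (fun t : ℝ => (t : ℂ)) 1 x := by
  simpa using (hasDerivAt_id x).ofReal_comp

lemma deriv_poly (A B C : ℂ) :
    deriv (fun t : ℝ => A + B * (t : ℂ) + C * (t : ℂ) ^ 2) 0 = B := by
  have h : HasDerivAt (fun t : ℝ => A + B * (t : ℂ) + C * ((t : ℂ) * (t : ℂ)))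
      (0 + B * 1 + C * (1 * ((0:ℝ) : ℂ) + ((0:ℝ) : ℂ) * 1)) 0 :=
    (((hasDerivAt_const (0:ℝ) A).add ((hasDerivAt_ofReal 0).const_mul B)).add
      ((((hasDerivAt_ofReal 0)).mul (hasDerivAt_ofReal 0)).const_mul C))
  have h2 : (fun t : ℝ => A + B * (t : ℂ) + C * (t : ℂ) ^ 2)
      = fun t : ℝ => A + B * (t : ℂ) + C * ((t : ℂ) * (t : ℂ)) := by
    funext t; ring
  rw [h2]
  simpa using h.deriv

lemma wirt_wirtBar_of_poly (F : (ℤ → ℂ) → ℂ) (v : ℤ → ℂ) (k : ℤ) (A P Q R R' : ℂ)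
    (h : ∀ c : ℂ, F (update v k (v k + c)) =
      A + P * c + Q * conj c + R * c ^ 2 + R' * (conj c) ^ 2) :
    wirt F v k = P ∧ wirtBar F v k = Q := by
  have hx : Dx F v k = P + Q := by
    unfold Dx
    have : (fun t : ℝ => F (update v k (v k + (t : ℂ)))) =
        fun t : ℝ => A + (P + Q) * (t : ℂ) + (R + R') * (t : ℂ) ^ 2 := by
      funext t
      rw [h]
      simp only [Complex.conj_ofReal]
      ring
    rw [this, deriv_poly]
  have hy : Dy F v k = P * Complex.I - Q * Complex.I := by
    unfold Dy
    have : (fun t : ℝ => F (update v k (v k + (t : ℂ) * Complex.I))) =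
        fun t : ℝ => A + (P * Complex.I - Q * Complex.I) * (t : ℂ)
          + (- R + - R') * (t : ℂ) ^ 2 := by
      funext t
      rw [h]
      simp only [map_mul, Complex.conj_ofReal, Complex.conj_I]
      rw [show ((t:ℂ) * Complex.I) ^ 2 = -(t:ℂ)^2 by
        rw [mul_pow, Complex.I_sq]; ring,
        show ((t:ℂ) * -Complex.I) ^ 2 = -(t:ℂ)^2 by
        rw [mul_pow, show (-Complex.I)^2 = Complex.I^2 by ring, Complex.I_sq]; ring]
      ring
    rw [this, deriv_poly]
  constructor
  · unfold wirt
    rw [hx, hy]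
    rw [show Complex.I * (P * Complex.I - Q * Complex.I)
        = P * (Complex.I * Complex.I) - Q * (Complex.I * Complex.I) by ring,
      Complex.I_mul_I]
    ring
  · unfold wirtBar
    rw [hx, hy]
    rw [show Complex.I * (P * Complex.I - Q * Complex.I)
        = P * (Complex.I * Complex.I) - Q * (Complex.I * Complex.I) by ring,
      Complex.I_mul_I]
    ring

end Psi2Aux
namespace Psi2Aux

open Complex

lemma amgm (x y A B : ℝ) (hx : 0 < x) (hy : 0 < y) (hA : 0 ≤ A) (hB : 0 ≤ B) :
    Real.sqrt x * Real.sqrt y / (x * y) * A * B ≤ (A ^ 2 / x + B ^ 2 / y) / 2 := by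
  obtain ⟨s, hs, rfl⟩ : ∃ s, 0 < s ∧ x = s * s :=
    ⟨Real.sqrt x, Real.sqrt_pos.mpr hx, (Real.mul_self_sqrt hx.le).symm⟩
  obtain ⟨t, ht, rfl⟩ : ∃ t, 0 < t ∧ y = t * t :=
    ⟨Real.sqrt y, Real.sqrt_pos.mpr hy, (Real.mul_self_sqrt hy.le).symm⟩
  rw [Real.sqrt_mul_self hs.le, Real.sqrt_mul_self ht.le]
  rw [div_add_div _ _ (by positivity) (by positivity), div_div,
    div_mul_eq_mul_div, div_mul_eq_mul_div,
    div_le_div_iff₀ (by positivity) (by positivity)]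
  nlinarith [sq_nonneg (A * t - B * s), mul_pos hs ht, mul_nonneg hA hB,
    mul_pos (mul_pos hs hs) (mul_pos ht ht), sq_nonneg (A*t*s*t - B*s*s*t)]

lemma g_nonneg (m' : ℝ) (v : ℤ → ℂ) (j : ℤ) :
    0 ≤ (if 1 ≤ j then ((j.natAbs : ℝ)) ^ (2 * m') * ‖v j‖ ^ 2 else 0) := by
  split_ifs <;> positivity

lemma summable_g (m' : ℝ) (v : ℤ → ℂ) (hv : hn m' v < ∞) :
    Summable (fun j : ℤ => if 1 ≤ j then ((j.natAbs : ℝ)) ^ (2 * m') * ‖v j‖ ^ 2 else 0) := by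
  unfold hn at hv
  have hX := (ENNReal.rpow_lt_top_iff_of_pos (by norm_num : (0:ℝ) < 1/2)).mp hv
  have h := ENNReal.summable_toReal hX.ne
  convert h using 2 with j
  split_ifs with h1
  · rw [ENNReal.toReal_mul, ← ENNReal.toReal_rpow, ENNReal.toReal_pow]
    simp
  · simp

lemma summable_weight (m' : ℝ) (hm' : 1 / 2 ≤ m') (v : ℤ → ℂ) (hv : hn m' v < ∞) :
    Summable (fun κ : ℤ => ‖vext v κ‖ ^ 2 / |(κ : ℝ)|) := by
  set g : ℤ → ℝ := fun j => if 1 ≤ j then ((j.natAbs : ℝ)) ^ (2 * m') * ‖v j‖ ^ 2 else 0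
    with hg
  have hsg : Summable g := summable_g m' v hv
  have hsg' : Summable (fun κ : ℤ => g κ + g (-κ)) :=
    hsg.add (hsg.comp_injective neg_injective)
  apply Summable.of_nonneg_of_le (fun κ => by positivity) _ hsg'
  intro κ
  have hm0 : (0:ℝ) ≤ 2 * m' := by linarith
  rcases lt_trichotomy κ 0 with h | h | h
  · have h1 : ¬ (1 ≤ κ) := by omega
    have h2 : 1 ≤ -κ := by omega
    have hvx : ‖vext v κ‖ = ‖v (-κ)‖ := by
      unfold vext; rw [if_neg (by omega), if_pos h]; simp
    have habs : |(κ:ℝ)| = (((-κ).natAbs : ℝ)) := by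
      rw [Nat.cast_natAbs]; push_cast; rw [abs_neg]
    have h1le : (1:ℝ) ≤ ((-κ).natAbs : ℝ) := by
      have : 1 ≤ (-κ).natAbs := by omega
      exact_mod_cast this
    have key : ‖v (-κ)‖ ^ 2 / |(κ:ℝ)| ≤ ((-κ).natAbs : ℝ) ^ (2 * m') * ‖v (-κ)‖ ^ 2 := by
      rw [habs]
      calc ‖v (-κ)‖ ^ 2 / ((-κ).natAbs : ℝ) ≤ ‖v (-κ)‖ ^ 2 / 1 :=
            div_le_div_of_nonneg_left (by positivity) one_pos h1le
        _ = ‖v (-κ)‖ ^ 2 := by ring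
        _ ≤ ((-κ).natAbs : ℝ) ^ (2 * m') * ‖v (-κ)‖ ^ 2 := by
            nlinarith [Real.one_le_rpow h1le hm0, sq_nonneg ‖v (-κ)‖]
    rw [hvx, hg]
    simp only [if_neg h1, if_pos h2, zero_add]
    exact key
  · subst h
    have hz : vext v 0 = 0 := by unfold vext; simp
    rw [hz]
    simp only [norm_zero]
    have := g_nonneg m' v 0
    have := g_nonneg m' v (-0)
    rw [hg]
    simp only [ne_eq, zero_pow, Int.cast_zero, abs_zero, div_zero]
    positivity
  · have h1 : 1 ≤ κ := by omega
    have hvx : ‖vext v κ‖ = ‖v κ‖ := by unfold vext; rw [if_pos h]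
    have habs : |(κ:ℝ)| = ((κ.natAbs : ℝ)) := by rw [Nat.cast_natAbs]; push_cast; ring
    have h1le : (1:ℝ) ≤ (κ.natAbs : ℝ) := by
      have : 1 ≤ κ.natAbs := by omega
      exact_mod_cast this
    have key : ‖v κ‖ ^ 2 / |(κ:ℝ)| ≤ (κ.natAbs : ℝ) ^ (2 * m') * ‖v κ‖ ^ 2 := by
      rw [habs]
      calc ‖v κ‖ ^ 2 / (κ.natAbs : ℝ) ≤ ‖v κ‖ ^ 2 / 1 :=
            div_le_div_of_nonneg_left (by positivity) one_pos h1le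
        _ = ‖v κ‖ ^ 2 := by ring
        _ ≤ (κ.natAbs : ℝ) ^ (2 * m') * ‖v κ‖ ^ 2 := by
            nlinarith [Real.one_le_rpow h1le hm0, sq_nonneg ‖v κ‖]
    have e1 : g κ = (κ.natAbs : ℝ) ^ (2 * m') * ‖v κ‖ ^ 2 := by
      simp only [hg, if_pos h1]
    have e2 : (0:ℝ) ≤ g (-κ) := by rw [hg]; exact g_nonneg m' v (-κ)
    rw [hvx]
    calc ‖v κ‖ ^ 2 / |(κ:ℝ)| ≤ (κ.natAbs : ℝ) ^ (2 * m') * ‖v κ‖ ^ 2 := key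
      _ ≤ _ := by rw [e1]; linarith

lemma summable_T0 (m' : ℝ) (hm' : 1 / 2 ≤ m') (v : ℤ → ℂ) (hv : hn m' v < ∞) (j : ℤ) :
    Summable (T0 j v) := by
  have hsum := summable_weight m' hm' v hv
  have hinj : Function.Injective (fun κ : ℤ => j - κ) := by intro a b h; simp only at h; omega
  have hsum2 : Summable (fun κ : ℤ => ‖vext v (j - κ)‖ ^ 2 / |(j : ℝ) - (κ : ℝ)|) := by
    have h := hsum.comp_injective hinj
    convert h using 2 with κ
    · rfl
    simp only [Function.comp_apply]
    push_cast
    ring_nf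
  apply Summable.of_norm_bounded
    (g := fun κ => (‖vext v κ‖ ^ 2 / |(κ : ℝ)| + ‖vext v (j - κ)‖ ^ 2 / |(j : ℝ) - (κ : ℝ)|) / 2)
    ((hsum.add hsum2).div_const 2)
  intro κ
  unfold T0
  split_ifs with hχ
  · rw [norm_mul, norm_mul, Complex.norm_real, Real.norm_eq_abs]
    have hκ0 : (0:ℝ) < |(κ:ℝ)| := by
      rw [abs_pos]; exact_mod_cast hχ.1
    have hκj : (0:ℝ) < |(j:ℝ) - (κ:ℝ)| := by
      rw [abs_pos, sub_ne_zero]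
      exact_mod_cast fun h => hχ.2 (by exact_mod_cast h.symm)
    have habs : |coeff j κ| = Real.sqrt |(κ:ℝ)| * Real.sqrt |(j:ℝ) - (κ:ℝ)| / (|(κ:ℝ)| * |(j:ℝ) - (κ:ℝ)|) := by
      unfold coeff
      rw [abs_div,
        _root_.abs_of_nonneg (by positivity : (0:ℝ) ≤ Real.sqrt |(κ:ℝ)| * Real.sqrt |(j:ℝ) - (κ:ℝ)|),
        abs_mul, abs_sub_comm ((κ:ℝ)) ((j:ℝ))]
    rw [habs]
    exact amgm _ _ _ _ hκ0 hκj (norm_nonneg _) (norm_nonneg _)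
  · rw [norm_zero]
    positivity

end Psi2Aux
namespace Psi2Aux

open Complex

def Pv (v : ℤ → ℂ) (j k : ℤ) : ℂ :=
  if k = j then 0 else ((coeff j k : ℂ) + (coeff j (j - k) : ℂ)) * vext v (j - k)

def Qv (v : ℤ → ℂ) (j k : ℤ) : ℂ :=
  ((coeff j (-k) : ℂ) + (coeff j (j + k) : ℂ)) * vext v (j + k)

def Rv (j k : ℤ) : ℂ := if j = 2 * k then (coeff j k : ℂ) else 0

lemma summable_single {a : ℤ} {X : ℂ} : Summable (fun κ : ℤ => if κ = a then X else 0) :=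
  summable_of_ne_finset_zero (s := {a}) (by
    intro b hb
    simp only [Finset.mem_singleton] at hb
    simp [hb])

lemma summable_Lt (j : ℤ) (v u : ℤ → ℂ) (s : Finset ℤ) (hu : ∀ i, u i ≠ 0 → i ∈ s) :
    Summable (Lt j v u) := by
  classical
  apply summable_of_ne_finset_zero
    (s := (s ∪ s.image (fun x => -x)) ∪ (s.image (fun x => j - x) ∪ s.image (fun x => j + x)))
  intro b hb
  simp only [Finset.mem_union, Finset.mem_image, not_or, not_exists, not_and] at hb
  obtain ⟨⟨w1, w2⟩, w3, w4⟩ := hb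
  have h1 : vext u b = 0 := by
    unfold vext
    split_ifs with hb1 hb2
    · by_contra h; exact w1 (hu _ h)
    · by_contra h
      have hm : u (-b) ≠ 0 := fun h0 => h (by rw [h0, map_zero])
      exact w2 (-b) (hu _ hm) (by omega)
    · rfl
  have h2 : vext u (j - b) = 0 := by
    unfold vext
    split_ifs with hb1 hb2
    · by_contra h; exact w3 (j - b) (hu _ h) (by omega)
    · by_contra h
      have hm : u (-(j - b)) ≠ 0 := fun h0 => h (by rw [h0, map_zero])
      exact w4 (-(j - b)) (hu _ hm) (by omega)
    · rfl
  unfold Lt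
  rw [h1, h2]
  split_ifs <;> simp

lemma summable_Qt (j : ℤ) (u : ℤ → ℂ) (s : Finset ℤ) (hu : ∀ i, u i ≠ 0 → i ∈ s) :
    Summable (Qt j u) := by
  classical
  apply summable_of_ne_finset_zero (s := s ∪ s.image (fun x => -x))
  intro b hb
  simp only [Finset.mem_union, Finset.mem_image, not_or, not_exists, not_and] at hb
  obtain ⟨w1, w2⟩ := hb
  have h1 : vext u b = 0 := by
    unfold vext
    split_ifs with hb1 hb2
    · by_contra h; exact w1 (hu _ h)
    · by_contra h
      have hm : u (-b) ≠ 0 := fun h0 => h (by rw [h0, map_zero])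
      exact w2 (-b) (hu _ hm) (by omega)
    · rfl
  unfold Qt
  rw [h1]
  split_ifs <;> simp

lemma psi2_add (j : ℤ) (v u : ℤ → ℂ) (h0 : Summable (T0 j v)) (hL : Summable (Lt j v u))
    (hQ : Summable (Qt j u)) :
    ψ2 j (fun κ => v κ + u κ) =
      ψ2 j v + (c0 j : ℂ) * ((∑' κ, Lt j v u κ) + ∑' κ, Qt j u κ) := by
  rw [psi2_eq, psi2_eq]
  have hpt : ∀ κ, T0 j (fun i => v i + u i) κ = T0 j v κ + (Lt j v u κ + Qt j u κ) := by
    intro κ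
    unfold T0 Lt Qt
    rw [vext_addf, vext_addf]
    split_ifs
    · ring
    · simp
  rw [tsum_congr hpt, Summable.tsum_add h0 (hL.add hQ), Summable.tsum_add hL hQ]
  ring

set_option maxHeartbeats 1000000 in
lemma Lt_single (j k : ℤ) (hj : 1 ≤ j) (hk : 1 ≤ k) (v : ℤ → ℂ) (c : ℂ) (κ : ℤ) :
    Lt j v (fun i => if i = k then c else 0) κ =
      c * (if κ = k then (if k = j then 0 else (coeff j k : ℂ) * vext v (j - k)) else 0)
      + c * (if κ = j - k then (if k = j then 0 else (coeff j (j - k) : ℂ) * vext v (j - k)) else 0)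
      + conj c * (if κ = -k then (coeff j (-k) : ℂ) * vext v (j + k) else 0)
      + conj c * (if κ = j + k then (coeff j (j + k) : ℂ) * vext v (j + k) else 0) := by
  unfold Lt
  rw [vext_single k hk c κ, vext_single k hk c (j - κ)]
  split_ifs
  all_goals try (exfalso; omega)
  all_goals subst_vars
  all_goals try simp only [sub_sub_cancel, sub_neg_eq_add]
  all_goals try ring
  all_goals ((have hx : j - κ = κ := by omega); rw [hx]; try ring)

set_option maxHeartbeats 1000000 in
lemma Qt_single (j k : ℤ) (hj : 1 ≤ j) (hk : 1 ≤ k) (c : ℂ) (κ : ℤ) :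
    Qt j (fun i => if i = k then c else 0) κ =
      c ^ 2 * (if κ = k then Rv j k else 0) := by
  unfold Qt Rv
  rw [vext_single k hk c κ, vext_single k hk c (j - κ)]
  split_ifs
  all_goals try (exfalso; omega)
  all_goals subst_vars
  all_goals try simp only [sub_sub_cancel, sub_neg_eq_add]
  all_goals try ring
  all_goals ((have hx : j - κ = κ := by omega); rw [hx]; try ring)

end Psi2Aux
namespace Psi2Aux

open Complex

lemma tsum_Lt_single (j k : ℤ) (hj : 1 ≤ j) (hk : 1 ≤ k) (v : ℤ → ℂ) (c : ℂ) :
    ∑' κ, Lt j v (fun i => if i = k then c else 0) κ = c * Pv v j k + conj c * Qv v j k := by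
  rw [tsum_congr (Lt_single j k hj hk v c)]
  simp only [mul_ite, mul_zero]
  rw [Summable.tsum_add ((summable_single.add summable_single).add summable_single) summable_single,
    Summable.tsum_add (summable_single.add summable_single) summable_single,
    Summable.tsum_add summable_single summable_single,
    tsum_ite_eq, tsum_ite_eq, tsum_ite_eq, tsum_ite_eq]
  unfold Pv Qv
  by_cases hkj : k = j
  · simp [hkj]
    ring
  · rw [if_neg hkj]
    simp only [if_neg hkj]
    ring

lemma tsum_Qt_single (j k : ℤ) (hj : 1 ≤ j) (hk : 1 ≤ k) (c : ℂ) :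
    ∑' κ, Qt j (fun i => if i = k then c else 0) κ = c ^ 2 * Rv j k := by
  rw [tsum_congr (Qt_single j k hj hk c)]
  simp only [mul_ite, mul_zero]
  rw [tsum_ite_eq]

lemma update_eq (v : ℤ → ℂ) (k : ℤ) (c : ℂ) :
    update v k (v k + c) = fun κ => v κ + (if κ = k then c else 0) := by
  funext κ
  rw [Function.update_apply]
  split_ifs with h
  · subst h; rfl
  · rw [add_zero]

lemma single_support (k : ℤ) (c : ℂ) :
    ∀ i, (if i = k then c else 0) ≠ 0 → i ∈ ({k} : Finset ℤ) := by
  intro i h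
  simp only [Finset.mem_singleton]
  by_contra hne
  rw [if_neg hne] at h
  exact h rfl

lemma psi2_poly (m' : ℝ) (hm' : 1 / 2 ≤ m') (v : ℤ → ℂ) (hv : hn m' v < ∞)
    (j k : ℤ) (hj : 1 ≤ j) (hk : 1 ≤ k) (c : ℂ) :
    ψ2 j (update v k (v k + c)) =
      ψ2 j v + ((c0 j : ℂ) * Pv v j k) * c + ((c0 j : ℂ) * Qv v j k) * conj c
        + ((c0 j : ℂ) * Rv j k) * c ^ 2 + 0 * (conj c) ^ 2 := by
  rw [update_eq]
  rw [psi2_add j v (fun i => if i = k then c else 0) (summable_T0 m' hm' v hv j)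
    (summable_Lt j v _ {k} (single_support k c)) (summable_Qt j _ {k} (single_support k c))]
  rw [tsum_Lt_single j k hj hk v c, tsum_Qt_single j k hj hk c]
  ring

lemma wirt_psi2 (m' : ℝ) (hm' : 1 / 2 ≤ m') (v : ℤ → ℂ) (hv : hn m' v < ∞)
    (j k : ℤ) (hj : 1 ≤ j) (hk : 1 ≤ k) :
    wirt (ψ2 j) v k = (c0 j : ℂ) * Pv v j k :=
  (wirt_wirtBar_of_poly (ψ2 j) v k (ψ2 j v) _ _ _ 0
    (psi2_poly m' hm' v hv j k hj hk)).1

lemma wirtBar_psi2 (m' : ℝ) (hm' : 1 / 2 ≤ m') (v : ℤ → ℂ) (hv : hn m' v < ∞)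
    (j k : ℤ) (hj : 1 ≤ j) (hk : 1 ≤ k) :
    wirtBar (ψ2 j) v k = (c0 j : ℂ) * Qv v j k :=
  (wirt_wirtBar_of_poly (ψ2 j) v k (ψ2 j v) _ _ _ 0
    (psi2_poly m' hm' v hv j k hj hk)).2

lemma wirtBar_conj_psi2 (m' : ℝ) (hm' : 1 / 2 ≤ m') (v : ℤ → ℂ) (hv : hn m' v < ∞)
    (j k : ℤ) (hj : 1 ≤ j) (hk : 1 ≤ k) :
    wirtBar (fun w => conj (ψ2 k w)) v j = conj ((c0 k : ℂ) * Pv v k j) := by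
  refine (wirt_wirtBar_of_poly _ v j (conj (ψ2 k v)) (conj ((c0 k : ℂ) * Qv v k j))
    (conj ((c0 k : ℂ) * Pv v k j)) 0 (conj ((c0 k : ℂ) * Rv k j)) ?_).2
  intro c
  rw [psi2_poly m' hm' v hv k j hk hj c]
  simp only [map_add, map_mul, map_pow, Complex.conj_conj, map_zero]
  ring

lemma M_symm (v : ℤ → ℂ) (j k : ℤ) (hj : 1 ≤ j) (hk : 1 ≤ k) :
    (c0 j : ℂ) * Qv v j k = (c0 k : ℂ) * Qv v k j := by
  unfold Qv
  rw [coeff_reflect' j k, coeff_reflect' k j, show k + j = j + k by ring]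
  have hC : ((c0 j : ℝ) : ℂ) * ((coeff j (-k) : ℝ) : ℂ)
      = ((c0 k : ℝ) : ℂ) * ((coeff k (-j) : ℝ) : ℂ) := by
    rw [← Complex.ofReal_mul, ← Complex.ofReal_mul, c0_coeff_neg j k hj hk]
  linear_combination (2 * vext v (j + k)) * hC

lemma W_skew (v : ℤ → ℂ) (j k : ℤ) (hj : 1 ≤ j) (hk : 1 ≤ k) :
    (c0 j : ℂ) * Pv v j k = -conj ((c0 k : ℂ) * Pv v k j) := by
  unfold Pv
  by_cases hkj : k = j
  · subst hkj
    simp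
  · rw [if_neg hkj, if_neg (fun h => hkj h.symm)]
    rw [coeff_reflect j k, coeff_reflect k j]
    simp only [map_mul, map_add, Complex.conj_ofReal, vext_conj, neg_sub]
    have hC : ((c0 j : ℝ) : ℂ) * ((coeff j k : ℝ) : ℂ)
        = -(((c0 k : ℝ) : ℂ) * ((coeff k j : ℝ) : ℂ)) := by
      rw [← Complex.ofReal_mul, ← Complex.ofReal_mul, ← Complex.ofReal_neg,
        c0_coeff_skew j k hj hk]
    linear_combination (2 * vext v (j - k)) * hC

end Psi2Aux
namespace Psi2Aux

open Complex

lemma Lt_smul (j : ℤ) (v ξ : ℤ → ℂ) (t : ℝ) (κ : ℤ) :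
    Lt j v (fun i => (t : ℂ) * ξ i) κ = (t : ℂ) * Lt j v ξ κ := by
  unfold Lt
  rw [vext_smul_real, vext_smul_real]
  split_ifs
  · ring
  · rw [mul_zero]

lemma Qt_smul (j : ℤ) (ξ : ℤ → ℂ) (t : ℝ) (κ : ℤ) :
    Qt j (fun i => (t : ℂ) * ξ i) κ = (t : ℂ) ^ 2 * Qt j ξ κ := by
  unfold Qt
  rw [vext_smul_real, vext_smul_real]
  split_ifs
  · ring
  · rw [mul_zero]

lemma vext_finsum (ξ : ℤ → ℂ) (s : Finset ℤ) (hs : ∀ i, ξ i ≠ 0 → i ∈ s) (n : ℤ) :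
    vext ξ n = ∑ k ∈ s, vext (fun i => if i = k then ξ k else 0) n := by
  classical
  have hξ : ∀ i, ξ i = ∑ k ∈ s, (if i = k then ξ k else 0) := by
    intro i
    rw [Finset.sum_ite_eq]
    split_ifs with h
    · rfl
    · by_contra hne
      exact h (hs i hne)
  unfold vext
  split_ifs with h1 h2
  · simp only [if_pos h1]
    exact hξ n
  · simp only [if_neg h1, if_pos h2]
    rw [← map_sum]
    exact congrArg conj (hξ (-n))
  · simp

lemma Lt_decomp (j : ℤ) (v ξ : ℤ → ℂ) (s : Finset ℤ) (hs : ∀ i, ξ i ≠ 0 → i ∈ s) (κ : ℤ) :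
    Lt j v ξ κ = ∑ k ∈ s, Lt j v (fun i => if i = k then ξ k else 0) κ := by
  by_cases hχ : κ ≠ 0 ∧ κ ≠ j
  · simp only [Lt, if_pos hχ]
    rw [vext_finsum ξ s hs κ, vext_finsum ξ s hs (j - κ), Finset.sum_mul, Finset.mul_sum,
      ← Finset.sum_add_distrib, Finset.mul_sum]
  · simp only [Lt, if_neg hχ]
    simp

lemma tsum_Lt (j : ℤ) (hj : 1 ≤ j) (v ξ : ℤ → ℂ) (s : Finset ℤ)
    (hs : ∀ i, ξ i ≠ 0 → i ∈ s) (hs1 : ∀ k ∈ s, 1 ≤ k) :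
    ∑' κ, Lt j v ξ κ = ∑ k ∈ s, (ξ k * Pv v j k + conj (ξ k) * Qv v j k) := by
  rw [tsum_congr (Lt_decomp j v ξ s hs),
    Summable.tsum_finsetSum (fun k _ => summable_Lt j v _ ({k} : Finset ℤ) (single_support k (ξ k)))]
  exact Finset.sum_congr rfl fun k hk => tsum_Lt_single j k hj (hs1 k hk) v (ξ k)

lemma deriv_poly_re (a b c : ℝ) :
    deriv (fun t : ℝ => a + b * t + c * t ^ 2) 0 = b := by
  have h : HasDerivAt (fun t : ℝ => a + b * t + c * (t * t))
      (0 + b * 1 + c * (1 * 0 + 0 * 1)) 0 :=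
    (((hasDerivAt_const (0:ℝ) a).add ((hasDerivAt_id 0).const_mul b)).add
      (((hasDerivAt_id 0).mul (hasDerivAt_id 0)).const_mul c))
  have h2 : (fun t : ℝ => a + b * t + c * t ^ 2) = fun t : ℝ => a + b * t + c * (t * t) := by
    funext t; ring
  rw [h2]
  simpa using h.deriv

lemma psi2_line (m' : ℝ) (hm' : 1 / 2 ≤ m') (v : ℤ → ℂ) (hv : hn m' v < ∞)
    (ξ : ℤ → ℂ) (sξ : Finset ℤ) (hsξ : ∀ i, ξ i ≠ 0 → i ∈ sξ) (j : ℤ) (t : ℝ) :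
    ψ2 j (fun κ => v κ + (t : ℂ) * ξ κ) =
      ψ2 j v + (t : ℂ) * ((c0 j : ℂ) * ∑' κ, Lt j v ξ κ)
        + (t : ℂ) ^ 2 * ((c0 j : ℂ) * ∑' κ, Qt j ξ κ) := by
  have hsup : ∀ i, (t : ℂ) * ξ i ≠ 0 → i ∈ sξ := by
    intro i h
    exact hsξ i (fun h0 => h (by rw [h0, mul_zero]))
  rw [psi2_add j v (fun i => (t : ℂ) * ξ i) (summable_T0 m' hm' v hv j)
    (summable_Lt j v _ sξ hsup) (summable_Qt j _ sξ hsup)]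
  rw [tsum_congr (Lt_smul j v ξ t), tsum_congr (Qt_smul j ξ t), tsum_mul_left, tsum_mul_left]
  ring

lemma deriv_oneForm (m' : ℝ) (hm' : 1 / 2 ≤ m') (v : ℤ → ℂ) (hv : hn m' v < ∞)
    (ξ η : ℤ → ℂ) (sη : Finset ℤ) (hsη : ∀ i, η i ≠ 0 ↔ i ∈ sη) (hη1 : ∀ i ∈ sη, 1 ≤ i)
    (sξ : Finset ℤ) (hsξ : ∀ i, ξ i ≠ 0 → i ∈ sξ) :
    deriv (fun t : ℝ => oneForm (fun κ => v κ + (t : ℂ) * ξ κ) η) 0 =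
      (∑ j ∈ sη, Complex.I * ((c0 j : ℂ) * ∑' κ, Lt j v ξ κ) * conj (η j)).re := by
  set zA : ℂ := ∑ j ∈ sη, Complex.I * ψ2 j v * conj (η j) with hzA
  set zB : ℂ := ∑ j ∈ sη, Complex.I * ((c0 j : ℂ) * ∑' κ, Lt j v ξ κ) * conj (η j) with hzB
  set zC : ℂ := ∑ j ∈ sη, Complex.I * ((c0 j : ℂ) * ∑' κ, Qt j ξ κ) * conj (η j) with hzC
  have key : ∀ t : ℝ, oneForm (fun κ => v κ + (t : ℂ) * ξ κ) η
      = zA.re + zB.re * t + zC.re * t ^ 2 := by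
    intro t
    unfold oneForm
    rw [tsum_eq_sum (s := sη) (f := fun j =>
        if 1 ≤ j then Complex.I * ψ2 j (fun κ => v κ + (t : ℂ) * ξ κ) * conj (η j) else 0)
      (by
        intro b hb
        have : η b = 0 := by
          by_contra h
          exact hb ((hsη b).mp h)
        simp [this])]
    have hterm : ∀ j ∈ sη,
        (if 1 ≤ j then Complex.I * ψ2 j (fun κ => v κ + (t : ℂ) * ξ κ) * conj (η j) else 0)
        = Complex.I * ψ2 j v * conj (η j)
          + (t : ℂ) * (Complex.I * ((c0 j : ℂ) * ∑' κ, Lt j v ξ κ) * conj (η j))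
          + (t : ℂ) ^ 2 * (Complex.I * ((c0 j : ℂ) * ∑' κ, Qt j ξ κ) * conj (η j)) := by
      intro j hjs
      rw [if_pos (hη1 j hjs), psi2_line m' hm' v hv ξ sξ hsξ j t]
      ring
    rw [Finset.sum_congr rfl hterm, Finset.sum_add_distrib, Finset.sum_add_distrib,
      ← Finset.mul_sum, ← Finset.mul_sum]
    rw [Complex.add_re, Complex.add_re, Complex.re_ofReal_mul]
    have : ((t : ℂ) ^ 2 * zC).re = zC.re * t ^ 2 := by
      rw [show ((t : ℂ) ^ 2 : ℂ) = ((t ^ 2 : ℝ) : ℂ) by push_cast; ring, Complex.re_ofReal_mul]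
      ring
    rw [this, hzA, hzB]
    ring
  have : (fun t : ℝ => oneForm (fun κ => v κ + (t : ℂ) * ξ κ) η)
      = fun t : ℝ => zA.re + zB.re * t + zC.re * t ^ 2 := funext key
  rw [this, deriv_poly_re]

lemma term_symm (m' : ℝ) (hm' : 1 / 2 ≤ m') (v : ℤ → ℂ) (hv : hn m' v < ∞)
    (j k : ℤ) (hj : 1 ≤ j) (hk : 1 ≤ k) (a b : ℂ) :
    (Complex.I * ((c0 j : ℂ) * (a * Pv v j k + conj a * Qv v j k)) * conj b).re
      = (Complex.I * ((c0 k : ℂ) * (b * Pv v k j + conj b * Qv v k j)) * conj a).re := by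
  have hW := W_skew v j k hj hk
  have hM := M_symm v j k hj hk
  have e1 : Complex.I * ((c0 j : ℂ) * (a * Pv v j k + conj a * Qv v j k)) * conj b
      = conj (Complex.I * (b * ((c0 k : ℂ) * Pv v k j)) * conj a)
        + Complex.I * (((c0 k : ℂ) * Qv v k j) * conj a * conj b) := by
    rw [show (c0 j : ℂ) * (a * Pv v j k + conj a * Qv v j k)
        = a * ((c0 j : ℂ) * Pv v j k) + conj a * ((c0 j : ℂ) * Qv v j k) by ring, hW, hM]
    simp only [map_mul, Complex.conj_I, Complex.conj_conj]
    ring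
  have e2 : Complex.I * ((c0 k : ℂ) * (b * Pv v k j + conj b * Qv v k j)) * conj a
      = Complex.I * (b * ((c0 k : ℂ) * Pv v k j)) * conj a
        + Complex.I * (((c0 k : ℂ) * Qv v k j) * conj a * conj b) := by
    ring
  rw [e1, e2, Complex.add_re, Complex.add_re, Complex.conj_re]

end Psi2Aux

open Psi2Aux

/-- The quadratic map `ψ₂` satisfies the symmetry relations
`∂ψ₂^j/∂v̄_k = ∂ψ₂^k/∂v̄_j` and `∂ψ₂^j/∂v_k = −∂ψ̄₂^k/∂v̄_j` for all `j, k ≥ 1`;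
consequently the 1-form `i ψ₂(v) dv` is closed, i.e. the quadratic correction to `ω₀` in
`(id + ψ₂)^* ω₀` vanishes. -/
theorem psi2_symmetry (m' : ℝ) (hm' : 1 / 2 ≤ m') (v : ℤ → ℂ) (hv : hn m' v < ∞) :
    (∀ j k : ℤ, 1 ≤ j → 1 ≤ k →
      wirtBar (ψ2 j) v k = wirtBar (ψ2 k) v j ∧
      wirt (ψ2 j) v k = -wirtBar (fun w => conj (ψ2 k w)) v j) ∧
    -- closedness of the 1-form `i ψ₂(v) dv`
    ∀ ξ η : ℤ → ℂ, {k | ξ k ≠ 0}.Finite → {k | η k ≠ 0}.Finite →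
      (∀ k, ξ k ≠ 0 → 1 ≤ k) → (∀ k, η k ≠ 0 → 1 ≤ k) →
      deriv (fun t : ℝ => oneForm (fun k => v k + (t : ℂ) * ξ k) η) 0 =
        deriv (fun t : ℝ => oneForm (fun k => v k + (t : ℂ) * η k) ξ) 0 := by
  classical
  constructor
  · intro j k hj hk
    constructor
    · rw [wirtBar_psi2 m' hm' v hv j k hj hk, wirtBar_psi2 m' hm' v hv k j hk hj]
      exact M_symm v j k hj hk
    · rw [wirt_psi2 m' hm' v hv j k hj hk, wirtBar_conj_psi2 m' hm' v hv j k hj hk]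
      exact W_skew v j k hj hk
  · intro ξ η hξf hηf hξ1 hη1
    set sξ := hξf.toFinset with hsξdef
    set sη := hηf.toFinset with hsηdef
    have hmξ : ∀ i, ξ i ≠ 0 ↔ i ∈ sξ := fun i => (Set.Finite.mem_toFinset hξf).symm
    have hmη : ∀ i, η i ≠ 0 ↔ i ∈ sη := fun i => (Set.Finite.mem_toFinset hηf).symm
    have hξ1' : ∀ i ∈ sξ, 1 ≤ i := fun i hi => hξ1 i ((hmξ i).mpr hi)
    have hη1' : ∀ i ∈ sη, 1 ≤ i := fun i hi => hη1 i ((hmη i).mpr hi)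
    rw [deriv_oneForm m' hm' v hv ξ η sη hmη hη1' sξ (fun i h => (hmξ i).mp h),
      deriv_oneForm m' hm' v hv η ξ sξ hmξ hξ1' sη (fun i h => (hmη i).mp h)]
    have e1 : (∑ j ∈ sη, Complex.I * ((c0 j : ℂ) * ∑' κ, Lt j v ξ κ) * conj (η j))
        = ∑ j ∈ sη, Complex.I * ((c0 j : ℂ) *
            ∑ k ∈ sξ, (ξ k * Pv v j k + conj (ξ k) * Qv v j k)) * conj (η j) :=
      Finset.sum_congr rfl fun j hj => by
        rw [tsum_Lt j (hη1' j hj) v ξ sξ (fun i h => (hmξ i).mp h) hξ1']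
    have e2 : (∑ k ∈ sξ, Complex.I * ((c0 k : ℂ) * ∑' κ, Lt k v η κ) * conj (ξ k))
        = ∑ k ∈ sξ, Complex.I * ((c0 k : ℂ) *
            ∑ j ∈ sη, (η j * Pv v k j + conj (η j) * Qv v k j)) * conj (ξ k) :=
      Finset.sum_congr rfl fun k hk => by
        rw [tsum_Lt k (hξ1' k hk) v η sη (fun i h => (hmη i).mp h) hη1']
    rw [e1, e2]
    simp only [Finset.mul_sum, Finset.sum_mul, Complex.re_sum]
    rw [Finset.sum_comm]
    apply Finset.sum_congr rfl
    intro k hk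
    apply Finset.sum_congr rfl
    intro j hj
    exact term_symm m' hm' v hv j k (hη1' j hj) (hξ1' k hk) (ξ k) (η j)
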